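/- For all natural numbers n ≥ 1, k ≥ 1 and every prime p, the p-adic valuation of C(n,k) = n!/(⌊n/α_1⌋!·⌊n/α_2⌋!·...·⌊n/α_k⌋!) is at least ⌊log_p(n)⌋, the greatest natural number α with p^α ≤ n; consequently ℓ_n ≤ C(n,k). -/

import Mathlib

/-- Auxiliary: `alphaAux i` is `α_{i+1}`, with `α_1 = 2` and
`α_{i+1} = α_i² - α_i + 1`. -/
def alphaAux : ℕ → ℕ
  | 0 => 2
  | i + 1 => alphaAux i ^ 2 - alphaAux i + 1

/-- The sequence `α_1 = 2, α_2 = 3, α_3 = 7, α_4 = 43, ...`, indexed from `1`. -/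
def alphaSeq (i : ℕ) : ℕ := alphaAux (i - 1)

/-- `lcmUpTo n` is `lcm(1, 2, ..., n)` (and `1` for `n = 0`). -/
def lcmUpTo (n : ℕ) : ℕ := (Finset.Icc 1 n).lcm id

/-- Hanson's sequence `C(n,k) = n! / (⌊n/α_1⌋! ⌊n/α_2⌋! ⋯ ⌊n/α_k⌋!)`. -/
def hansonC (n k : ℕ) : ℕ :=
  n.factorial / ∏ i ∈ Finset.Icc 1 k, (n / alphaSeq i).factorial

lemma alphaAux_two_le (i : ℕ) : 2 ≤ alphaAux i := by
  induction i with
  | zero => simp [alphaAux]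
  | succ i ih =>
    have h : alphaAux i + 2 ≤ alphaAux i ^ 2 := by nlinarith
    simp only [alphaAux]
    omega

lemma alphaAux_eq_prod (k : ℕ) :
    alphaAux k = (∏ i ∈ Finset.range k, alphaAux i) + 1 := by
  induction k with
  | zero => simp [alphaAux]
  | succ k ih =>
    rw [Finset.prod_range_succ]
    show alphaAux k ^ 2 - alphaAux k + 1 = _
    have h2 := alphaAux_two_le k
    have hsq : alphaAux k ^ 2 = (alphaAux k - 1) * alphaAux k + alphaAux k := by
      obtain ⟨m, hm⟩ := Nat.exists_eq_add_of_le h2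
      have h1 : alphaAux k - 1 = m + 1 := by omega
      rw [h1, hm]; ring
    have hP : alphaAux k - 1 = ∏ i ∈ Finset.range k, alphaAux i := by omega
    rw [hsq, Nat.add_sub_cancel, hP]

lemma sum_inv_alphaAux (k : ℕ) :
    ∑ i ∈ Finset.range k, (1 : ℚ) / (alphaAux i : ℚ)
      = 1 - 1 / ∏ i ∈ Finset.range k, (alphaAux i : ℚ) := by
  induction k with
  | zero => simp
  | succ k ih =>
    have h2 := alphaAux_two_le k
    have hP : (∏ i ∈ Finset.range k, (alphaAux i : ℚ)) = (alphaAux k : ℚ) - 1 := by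
      have := alphaAux_eq_prod k
      rw [← Nat.cast_prod]
      rw [this]
      push_cast
      ring
    have ha : (alphaAux k : ℚ) ≠ 0 := by
      have : (2 : ℚ) ≤ (alphaAux k : ℚ) := by exact_mod_cast h2
      linarith
    have ha1 : (alphaAux k : ℚ) - 1 ≠ 0 := by
      have : (2 : ℚ) ≤ (alphaAux k : ℚ) := by exact_mod_cast h2
      linarith
    rw [Finset.sum_range_succ, ih, Finset.prod_range_succ, hP]
    field_simp
    ring

lemma sum_div_alphaAux_le (k m : ℕ) (hm : 1 ≤ m) :
    (∑ i ∈ Finset.range k, m / alphaAux i) + 1 ≤ m := by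
  have hP : (0 : ℚ) < ∏ i ∈ Finset.range k, (alphaAux i : ℚ) := by
    apply Finset.prod_pos
    intro i _
    have := alphaAux_two_le i
    positivity
  have key : ((∑ i ∈ Finset.range k, m / alphaAux i : ℕ) : ℚ) < (m : ℚ) := by
    push_cast
    calc (∑ i ∈ Finset.range k, ((m / alphaAux i : ℕ) : ℚ))
        ≤ ∑ i ∈ Finset.range k, (m : ℚ) / (alphaAux i : ℚ) :=
          Finset.sum_le_sum fun i _ => Nat.cast_div_le
      _ = (m : ℚ) * ∑ i ∈ Finset.range k, (1 : ℚ) / (alphaAux i : ℚ) := by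
          rw [Finset.mul_sum]; exact Finset.sum_congr rfl fun i _ => by ring
      _ = (m : ℚ) * (1 - 1 / ∏ i ∈ Finset.range k, (alphaAux i : ℚ)) := by
          rw [sum_inv_alphaAux]
      _ < (m : ℚ) := by
          have hm' : (1 : ℚ) ≤ (m : ℚ) := by exact_mod_cast hm
          have : 0 < (m : ℚ) / ∏ i ∈ Finset.range k, (alphaAux i : ℚ) := by positivity
          rw [mul_sub, mul_one, mul_one_div]
          linarith
  have := Nat.cast_lt (α := ℚ) |>.mp key
  omega

lemma hansonC_eq (n k : ℕ) :
    hansonC n k = n.factorial / ∏ i ∈ Finset.range k, (n / alphaAux i).factorial := by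
  unfold hansonC
  rw [← Finset.Ico_add_one_right_eq_Icc, Finset.prod_Ico_eq_prod_range]
  simp [alphaSeq]

lemma prodD_dvd (n k : ℕ) (hn : 1 ≤ n) :
    (∏ i ∈ Finset.range k, (n / alphaAux i).factorial) ∣ n.factorial := by
  refine dvd_trans (Nat.prod_factorial_dvd_factorial_sum _ _) (Nat.factorial_dvd_factorial ?_)
  have := sum_div_alphaAux_le k n hn
  omega

lemma valuation_key (n k p : ℕ) (hp : p.Prime) (hn : 1 ≤ n) :
    (∑ i ∈ Finset.range k, padicValNat p (n / alphaAux i).factorial) + Nat.log p n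
      ≤ padicValNat p n.factorial := by
  haveI : Fact p.Prime := ⟨hp⟩
  set b := Nat.log p n + 1 with hb
  rw [padicValNat_factorial (p := p) (lt_add_one _)]
  have hvi : ∀ i, padicValNat p (n / alphaAux i).factorial
      = ∑ j ∈ Finset.Ico 1 b, (n / p ^ j) / alphaAux i := by
    intro i
    rw [padicValNat_factorial (p := p)
      (lt_of_le_of_lt (Nat.log_mono_right (Nat.div_le_self _ _)) (lt_add_one _))]
    refine Finset.sum_congr rfl fun j _ => ?_
    rw [Nat.div_div_eq_div_mul, Nat.div_div_eq_div_mul, mul_comm]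
  simp_rw [hvi]
  rw [Finset.sum_comm]
  have main : ∀ j ∈ Finset.Ico 1 b,
      (∑ i ∈ Finset.range k, n / p ^ j / alphaAux i) + 1 ≤ n / p ^ j := by
    intro j hj
    have hj' := Finset.mem_Ico.mp hj
    have hpj : p ^ j ≤ n := by
      calc p ^ j ≤ p ^ Nat.log p n :=
            Nat.pow_le_pow_right hp.pos (by omega)
        _ ≤ n := Nat.pow_log_le_self p (by omega)
    have hm : 1 ≤ n / p ^ j := (Nat.one_le_div_iff (Nat.pow_pos (n := j) hp.pos)).mpr hpj
    exact sum_div_alphaAux_le k _ hm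
  calc (∑ j ∈ Finset.Ico 1 b, ∑ i ∈ Finset.range k, n / p ^ j / alphaAux i) + Nat.log p n
      = ∑ j ∈ Finset.Ico 1 b, ((∑ i ∈ Finset.range k, n / p ^ j / alphaAux i) + 1) := by
        rw [Finset.sum_add_distrib, Finset.sum_const, smul_eq_mul, mul_one]
        congr 1
        simp [hb]
    _ ≤ ∑ j ∈ Finset.Ico 1 b, n / p ^ j := Finset.sum_le_sum main

/-- For `n ≥ 1`, `k ≥ 1` and a prime `p`, the `p`-adic valuation of `C(n,k)`
is at least `⌊log_p n⌋`, the greatest `α` with `p^α ≤ n`; consequently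
`lcm(1, ..., n) ≤ C(n,k)`. -/
theorem hansonC_valuation (n k : ℕ) (hn : 1 ≤ n) (hk : 1 ≤ k) :
    (∀ p : ℕ, p.Prime → Nat.log p n ≤ padicValNat p (hansonC n k)) ∧
    lcmUpTo n ≤ hansonC n k := by
  have hD := prodD_dvd n k hn
  have hDpos : 0 < ∏ i ∈ Finset.range k, (n / alphaAux i).factorial :=
    Finset.prod_pos fun i _ => Nat.factorial_pos _
  have hCpos : 0 < hansonC n k := by
    rw [hansonC_eq]
    exact Nat.div_pos (Nat.le_of_dvd (Nat.factorial_pos n) hD) hDpos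
  have hval : ∀ p : ℕ, p.Prime → Nat.log p n ≤ padicValNat p (hansonC n k) := by
    intro p hp
    haveI : Fact p.Prime := ⟨hp⟩
    have h1 : padicValNat p (hansonC n k)
        = padicValNat p n.factorial
          - ∑ i ∈ Finset.range k, padicValNat p (n / alphaAux i).factorial := by
      rw [hansonC_eq, ← Nat.factorization_def _ hp, Nat.factorization_div hD,
        Finsupp.tsub_apply, Nat.factorization_def _ hp,
        Nat.factorization_prod (fun i _ => (Nat.factorial_pos _).ne'),
        Finset.sum_apply']
      congr 1
      exact Finset.sum_congr rfl fun i _ => Nat.factorization_def _ hp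
    have h2 := valuation_key n k p hp hn
    omega
  refine ⟨hval, ?_⟩
  refine Nat.le_of_dvd hCpos (Finset.lcm_dvd fun m hm => ?_)
  obtain ⟨hm1, hm2⟩ := Finset.mem_Icc.mp hm
  show m ∣ hansonC n k
  rw [← Nat.factorization_le_iff_dvd (by omega) hCpos.ne']
  intro p
  by_cases hp : p.Prime
  · rw [Nat.factorization_def _ hp, Nat.factorization_def _ hp]
    have hdvd : p ^ padicValNat p m ∣ m := pow_padicValNat_dvd
    have hle : p ^ padicValNat p m ≤ n :=
      le_trans (Nat.le_of_dvd (by omega) hdvd) hm2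
    have : padicValNat p m ≤ Nat.log p n :=
      (Nat.le_log_iff_pow_le hp.one_lt (by omega)).mpr hle
    exact le_trans this (hval p hp)
  · simp [Nat.factorization_eq_zero_of_not_prime _ hp]
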